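/- Let H, B, δ, v, β, ξ, γ ≥ 0 and c₀, c₁, c₂, c₃, c₄, h > 0 and M₁, M₂, M₃ ≥ 0 be real constants. Define f : ℝ³ → ℝ³ by f₁(z) = H·c₀·z₂/(z₁ + c₀) − δ·z₁·z₂/(z₁ + c₂) − v·z₁·z₃/(z₁ + c₃), f₂(z) = (B·z₁/(z₁ + c₁) − γ·z₂)·z₂ − β·z₂·z₃/(z₂ + h), and f₃(z) = ξ·β·z₁²·z₂·z₃/((z₁² + c₄²)·(z₂ + h)). Set L₁ = H·M₂/c₀ + δ·M₂/c₂ + v·M₃/c₃ + B·M₂/c₁ + 2·ξ·β·M₁·M₂·M₃/(h·c₄²), L₂ = H·(M₁ + c₀)/c₀ + δ·M₁·(M₁ + c₂)/c₂² + B·M₁/c₁ + 2·γ·M₂ + β·M₃/h + ξ·β·M₁²·M₃/(h·c₄²), L₃ = v·M₁·(M₁ + c₃)/c₃² + β·M₂/h + ξ·β·M₁²·M₂/(h·c₄²), and L = max{L₁, L₂, L₃}. Then for all x = (x₁, x₂, x₃) and y = (y₁, y₂, y₃) with 0 ≤ xᵢ, yᵢ ≤ Mᵢ for i = 1, 2,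 3, one has ‖f(x) − f(y)‖₁ ≤ L·‖x − y‖₁, where ‖z‖₁ = |z₁| + |z₂| + |z₃|; i.e., f is Lipschitz with constant L on the box Ω = {z ∈ ℝ³ : 0 ≤ zᵢ ≤ Mᵢ, i = 1, 2, 3} with respect to the ℓ¹ norm. -/
import Mathlib

lemma abs_sub_le' (p q : ℝ) : |p - q| ≤ |p| + |q| := by
  rw [sub_eq_add_neg]; exact (abs_add_le _ _).trans (by rw [abs_neg])

lemma aux_prod (c Ma Mb a b a' b' : ℝ) (hc : 0 < c)
    (ha : 0 ≤ a) (haM : a ≤ Ma) (ha' : 0 ≤ a')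
    (hb0 : 0 ≤ b') (hbM : b' ≤ Mb) :
    |a * b / (a + c) - a' * b' / (a' + c)| ≤ Mb / c * |a - a'| + Ma / c * |b - b'| := by
  have hA : 0 < a + c := by linarith
  have hA' : 0 < a' + c := by linarith
  have hD : 0 < (a + c) * (a' + c) := mul_pos hA hA'
  have key : a * b / (a + c) - a' * b' / (a' + c)
      = (c * b' * (a - a') + a * (a' + c) * (b - b')) / ((a + c) * (a' + c)) := by
    field_simp; ring
  rw [key, abs_div, abs_of_pos hD, div_le_iff₀ hD]
  have ht1 : (0:ℝ) ≤ |a - a'| := abs_nonneg _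
  have ht2 : (0:ℝ) ≤ |b - b'| := abs_nonneg _
  have h1 : |c * b' * (a - a') + a * (a' + c) * (b - b')|
      ≤ c * b' * |a - a'| + a * (a' + c) * |b - b'| := by
    have e1' : |c * b' * (a - a')| = c * b' * |a - a'| := by
      rw [abs_mul, abs_of_nonneg (by positivity : (0:ℝ) ≤ c * b')]
    have e2' : |a * (a' + c) * (b - b')| = a * (a' + c) * |b - b'| := by
      rw [abs_mul, abs_of_nonneg (by positivity : (0:ℝ) ≤ a * (a' + c))]
    exact (abs_add_le _ _).trans (by rw [e1', e2'])
  refine h1.trans ?_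
  have e1 : c * b' * |a - a'| ≤ Mb / c * |a - a'| * ((a + c) * (a' + c)) := by
    rw [div_mul_eq_mul_div, div_mul_eq_mul_div, le_div_iff₀ hc]
    have hMb : 0 ≤ Mb := le_trans hb0 hbM
    nlinarith [mul_nonneg (mul_nonneg hMb ha) (mul_nonneg ha' ht1),
      mul_nonneg (mul_nonneg hMb ha) (mul_nonneg hc.le ht1),
      mul_nonneg (mul_nonneg hMb ha') (mul_nonneg hc.le ht1),
      mul_nonneg (mul_nonneg (sub_nonneg.2 hbM) hc.le) (mul_nonneg hc.le ht1)]
  have e2 : a * (a' + c) * |b - b'| ≤ Ma / c * |b - b'| * ((a + c) * (a' + c)) := by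
    rw [div_mul_eq_mul_div, div_mul_eq_mul_div, le_div_iff₀ hc]
    nlinarith [mul_nonneg (mul_nonneg (sub_nonneg.2 haM) hA'.le) (mul_nonneg hc.le ht2),
      mul_nonneg (mul_nonneg (le_trans ha haM) hA'.le) (mul_nonneg ha ht2)]
  nlinarith [e1, e2]

lemma aux_H (c Ma Mb a b a' b' : ℝ) (hc : 0 < c)
    (ha : 0 ≤ a) (ha' : 0 ≤ a') (hb0 : 0 ≤ b') (hbM : b' ≤ Mb) :
    |c * b / (a + c) - c * b' / (a' + c)| ≤ Mb / c * |a - a'| + |b - b'| := by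
  have hA : 0 < a + c := by linarith
  have hA' : 0 < a' + c := by linarith
  have hD : 0 < (a + c) * (a' + c) := mul_pos hA hA'
  have key : c * b / (a + c) - c * b' / (a' + c)
      = (c * (a' + c) * (b - b') - c * b' * (a - a')) / ((a + c) * (a' + c)) := by
    field_simp; ring
  rw [key, abs_div, abs_of_pos hD, div_le_iff₀ hD]
  have ht1 : (0:ℝ) ≤ |a - a'| := abs_nonneg _
  have ht2 : (0:ℝ) ≤ |b - b'| := abs_nonneg _
  have h1 : |c * (a' + c) * (b - b') - c * b' * (a - a')|
      ≤ c * (a' + c) * |b - b'| + c * b' * |a - a'| := by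
    have e1' : |c * (a' + c) * (b - b')| = c * (a' + c) * |b - b'| := by
      rw [abs_mul, abs_of_nonneg (by positivity : (0:ℝ) ≤ c * (a' + c))]
    have e2' : |c * b' * (a - a')| = c * b' * |a - a'| := by
      rw [abs_mul, abs_of_nonneg (by positivity : (0:ℝ) ≤ c * b')]
    exact (abs_sub_le' _ _).trans (by rw [e1', e2'])
  refine h1.trans ?_
  have hMb : 0 ≤ Mb := le_trans hb0 hbM
  have e1 : c * b' * |a - a'| ≤ Mb / c * |a - a'| * ((a + c) * (a' + c)) := by
    rw [div_mul_eq_mul_div, div_mul_eq_mul_div, le_div_iff₀ hc]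
    nlinarith [mul_nonneg (mul_nonneg hMb ha) (mul_nonneg ha' ht1),
      mul_nonneg (mul_nonneg hMb ha) (mul_nonneg hc.le ht1),
      mul_nonneg (mul_nonneg hMb ha') (mul_nonneg hc.le ht1),
      mul_nonneg (mul_nonneg (sub_nonneg.2 hbM) hc.le) (mul_nonneg hc.le ht1)]
  have e2 : c * (a' + c) * |b - b'| ≤ |b - b'| * ((a + c) * (a' + c)) := by
    nlinarith [mul_nonneg (mul_nonneg ha hA'.le) ht2]
  nlinarith [e1, e2]

lemma aux_P (c Ma a a' : ℝ) (hc : 0 < c) (ha0 : 0 ≤ a) (haM : a ≤ Ma)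
    (ha0' : 0 ≤ a') (haM' : a' ≤ Ma) :
    |a ^ 2 / (a ^ 2 + c ^ 2) - a' ^ 2 / (a' ^ 2 + c ^ 2)| ≤ 2 * Ma / c ^ 2 * |a - a'| := by
  have h1 : (0:ℝ) < a ^ 2 + c ^ 2 := by positivity
  have h2 : (0:ℝ) < a' ^ 2 + c ^ 2 := by positivity
  have hD : (0:ℝ) < (a ^ 2 + c ^ 2) * (a' ^ 2 + c ^ 2) := mul_pos h1 h2
  have key : a ^ 2 / (a ^ 2 + c ^ 2) - a' ^ 2 / (a' ^ 2 + c ^ 2)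
      = c ^ 2 * (a + a') * (a - a') / ((a ^ 2 + c ^ 2) * (a' ^ 2 + c ^ 2)) := by
    field_simp; ring
  rw [key, abs_div, abs_of_pos hD, div_le_iff₀ hD]
  have ht : (0:ℝ) ≤ |a - a'| := abs_nonneg _
  have hnum : |c ^ 2 * (a + a') * (a - a')| = c ^ 2 * (a + a') * |a - a'| := by
    rw [abs_mul, abs_of_nonneg (by positivity : (0:ℝ) ≤ c ^ 2 * (a + a'))]
  rw [hnum, div_mul_eq_mul_div, div_mul_eq_mul_div, le_div_iff₀ (by positivity : (0:ℝ) < c ^ 2)]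
  have hDge : c ^ 2 * c ^ 2 ≤ (a ^ 2 + c ^ 2) * (a' ^ 2 + c ^ 2) := by
    nlinarith [sq_nonneg a, sq_nonneg a', sq_nonneg (a * a')]
  have h2Ma : a + a' ≤ 2 * Ma := by linarith
  nlinarith [mul_nonneg (mul_nonneg ht (sub_nonneg.2 h2Ma)) hD.le,
    mul_nonneg (mul_nonneg ht (add_nonneg ha0 ha0')) (sub_nonneg.2 hDge)]

lemma aux_Q (h b b' : ℝ) (hh : 0 < h) (hb : 0 ≤ b) (hb' : 0 ≤ b') :
    |b / (b + h) - b' / (b' + h)| ≤ |b - b'| / h := by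
  have h1 : 0 < b + h := by linarith
  have h2 : 0 < b' + h := by linarith
  have hD : 0 < (b + h) * (b' + h) := mul_pos h1 h2
  have key : b / (b + h) - b' / (b' + h) = h * (b - b') / ((b + h) * (b' + h)) := by
    field_simp; ring
  rw [key, abs_div, abs_of_pos hD, div_le_div_iff₀ hD hh]
  have ht : (0:ℝ) ≤ |b - b'| := abs_nonneg _
  rw [abs_mul, abs_of_pos hh]
  nlinarith [mul_nonneg ht (mul_nonneg hb hb'), mul_nonneg ht (mul_nonneg hb hh.le),
    mul_nonneg ht (mul_nonneg hb' hh.le)]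

lemma aux_split (Px Py Qx Qy x₃ y₃ p q mP mQ M₃ : ℝ)
    (hP : |Px - Py| ≤ p) (hQ : |Qx - Qy| ≤ q) (hQxb : |Qx| ≤ mQ) (hQyb : |Qy| ≤ mQ)
    (hPyb : |Py| ≤ mP) (hx₃b : |x₃| ≤ M₃) :
    |Px * Qx * x₃ - Py * Qy * y₃| ≤ p * mQ * M₃ + mP * q * M₃ + mP * mQ * |x₃ - y₃| := by
  have hp : 0 ≤ p := le_trans (abs_nonneg _) hP
  have hq : 0 ≤ q := le_trans (abs_nonneg _) hQ
  have hmP : 0 ≤ mP := le_trans (abs_nonneg _) hPyb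
  have hmQ : 0 ≤ mQ := le_trans (abs_nonneg _) hQxb
  have hM₃ : 0 ≤ M₃ := le_trans (abs_nonneg _) hx₃b
  have split : Px * Qx * x₃ - Py * Qy * y₃
      = (Px - Py) * Qx * x₃ + Py * (Qx - Qy) * x₃ + Py * Qy * (x₃ - y₃) := by ring
  rw [split]
  have b1 : |(Px - Py) * Qx * x₃| ≤ p * mQ * M₃ := by
    rw [abs_mul, abs_mul]
    exact mul_le_mul (mul_le_mul hP hQxb (abs_nonneg _) hp) hx₃b (abs_nonneg _)
      (mul_nonneg hp hmQ)
  have b2 : |Py * (Qx - Qy) * x₃| ≤ mP * q * M₃ := by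
    rw [abs_mul, abs_mul]
    exact mul_le_mul (mul_le_mul hPyb hQ (abs_nonneg _) hmP) hx₃b (abs_nonneg _)
      (mul_nonneg hmP hq)
  have b3 : |Py * Qy * (x₃ - y₃)| ≤ mP * mQ * |x₃ - y₃| := by
    rw [abs_mul, abs_mul]
    exact mul_le_mul_of_nonneg_right (mul_le_mul hPyb hQyb (abs_nonneg _) hmP) (abs_nonneg _)
  calc |(Px - Py) * Qx * x₃ + Py * (Qx - Qy) * x₃ + Py * Qy * (x₃ - y₃)|
      ≤ |(Px - Py) * Qx * x₃| + |Py * (Qx - Qy) * x₃| + |Py * Qy * (x₃ - y₃)| :=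
        abs_add_three _ _ _
    _ ≤ p * mQ * M₃ + mP * q * M₃ + mP * mQ * |x₃ - y₃| := by linarith

lemma aux_f3 (c h M₁ M₂ M₃ x₁ x₂ x₃ y₁ y₂ y₃ : ℝ) (hc : 0 < c) (hh : 0 < h)
    (hx₁ : 0 ≤ x₁) (hx₁' : x₁ ≤ M₁) (hy₁ : 0 ≤ y₁) (hy₁' : y₁ ≤ M₁)
    (hx₂ : 0 ≤ x₂) (hx₂' : x₂ ≤ M₂) (hy₂ : 0 ≤ y₂) (hy₂' : y₂ ≤ M₂)
    (hx₃ : 0 ≤ x₃) (hx₃' : x₃ ≤ M₃) :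
    |x₁ ^ 2 * x₂ * x₃ / ((x₁ ^ 2 + c ^ 2) * (x₂ + h))
      - y₁ ^ 2 * y₂ * y₃ / ((y₁ ^ 2 + c ^ 2) * (y₂ + h))|
    ≤ 2 * M₁ * M₂ * M₃ / (h * c ^ 2) * |x₁ - y₁|
      + M₁ ^ 2 * M₃ / (h * c ^ 2) * |x₂ - y₂|
      + M₁ ^ 2 * M₂ / (h * c ^ 2) * |x₃ - y₃| := by
  have hd1 : (0:ℝ) < x₁ ^ 2 + c ^ 2 := by positivity
  have hd2 : (0:ℝ) < y₁ ^ 2 + c ^ 2 := by positivity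
  have hd3 : (0:ℝ) < x₂ + h := by linarith
  have hd4 : (0:ℝ) < y₂ + h := by linarith
  have eqx : x₁ ^ 2 * x₂ * x₃ / ((x₁ ^ 2 + c ^ 2) * (x₂ + h))
      = x₁ ^ 2 / (x₁ ^ 2 + c ^ 2) * (x₂ / (x₂ + h)) * x₃ := by
    field_simp
  have eqy : y₁ ^ 2 * y₂ * y₃ / ((y₁ ^ 2 + c ^ 2) * (y₂ + h))
      = y₁ ^ 2 / (y₁ ^ 2 + c ^ 2) * (y₂ / (y₂ + h)) * y₃ := by
    field_simp
  rw [eqx, eqy]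
  have hPdiff := aux_P c M₁ x₁ y₁ hc hx₁ hx₁' hy₁ hy₁'
  have hQdiff := aux_Q h x₂ y₂ hh hx₂ hy₂
  have hQxb : |x₂ / (x₂ + h)| ≤ M₂ / h := by
    rw [abs_of_nonneg (div_nonneg hx₂ hd3.le), div_le_div_iff₀ hd3 hh]; nlinarith
  have hQyb : |y₂ / (y₂ + h)| ≤ M₂ / h := by
    rw [abs_of_nonneg (div_nonneg hy₂ hd4.le), div_le_div_iff₀ hd4 hh]; nlinarith
  have hPyb : |y₁ ^ 2 / (y₁ ^ 2 + c ^ 2)| ≤ M₁ ^ 2 / c ^ 2 := by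
    rw [abs_of_nonneg (div_nonneg (sq_nonneg _) hd2.le),
      div_le_div_iff₀ hd2 (by positivity : (0:ℝ) < c ^ 2)]
    nlinarith [mul_le_mul hy₁' hy₁' hy₁ (le_trans hy₁ hy₁'), sq_nonneg c]
  have hx₃b : |x₃| ≤ M₃ := by rw [abs_of_nonneg hx₃]; exact hx₃'
  have main := aux_split (x₁ ^ 2 / (x₁ ^ 2 + c ^ 2)) (y₁ ^ 2 / (y₁ ^ 2 + c ^ 2))
    (x₂ / (x₂ + h)) (y₂ / (y₂ + h)) x₃ y₃
    (2 * M₁ / c ^ 2 * |x₁ - y₁|) (|x₂ - y₂| / h) (M₁ ^ 2 / c ^ 2) (M₂ / h) M₃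
    hPdiff hQdiff hQxb hQyb hPyb hx₃b
  refine main.trans (le_of_eq ?_)
  ring
lemma coeff_div (d m c : ℝ) (hd : 0 ≤ d) (hm : 0 ≤ m) (hc : 0 < c) :
    d * m / c ≤ d * m * (m + c) / c ^ 2 := by
  rw [div_le_div_iff₀ hc (by positivity)]
  nlinarith [mul_nonneg (mul_nonneg hd hm) (mul_nonneg hm hc.le)]

lemma coeff_H (H m c : ℝ) (hH : 0 ≤ H) (hm : 0 ≤ m) (hc : 0 < c) :
    H ≤ H * (m + c) / c := by
  rw [le_div_iff₀ hc]
  exact mul_le_mul_of_nonneg_left (by linarith) hH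

lemma abs_sub_sub (p q r : ℝ) : |p - q - r| ≤ |p| + |q| + |r| := by
  have e : p - q - r = p + -q + -r := by ring
  rw [e]
  simpa [abs_neg] using abs_add_three p (-q) (-r)

/-- The nonlinear part `f` of the plankton–oxygen model is Lipschitz with constant
`L = max {L₁, L₂, L₃}` on the box `Ω` with respect to the ℓ¹ norm. -/
theorem f_lipschitz
    (H B δ v β ξ γ c₀ c₁ c₂ c₃ c₄ h M₁ M₂ M₃ : ℝ)
    (hH : 0 ≤ H) (hB : 0 ≤ B) (hδ : 0 ≤ δ) (hv : 0 ≤ v) (hβ : 0 ≤ β)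
    (hξ : 0 ≤ ξ) (hγ : 0 ≤ γ)
    (hc₀ : 0 < c₀) (hc₁ : 0 < c₁) (hc₂ : 0 < c₂) (hc₃ : 0 < c₃) (hc₄ : 0 < c₄)
    (hh : 0 < h) (hM₁ : 0 ≤ M₁) (hM₂ : 0 ≤ M₂) (hM₃ : 0 ≤ M₃)
    (f₁ f₂ f₃ : ℝ → ℝ → ℝ → ℝ)
    (hf₁ : ∀ z₁ z₂ z₃, f₁ z₁ z₂ z₃ =
      H * c₀ * z₂ / (z₁ + c₀) - δ * z₁ * z₂ / (z₁ + c₂) - v * z₁ * z₃ / (z₁ + c₃))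
    (hf₂ : ∀ z₁ z₂ z₃, f₂ z₁ z₂ z₃ =
      (B * z₁ / (z₁ + c₁) - γ * z₂) * z₂ - β * z₂ * z₃ / (z₂ + h))
    (hf₃ : ∀ z₁ z₂ z₃, f₃ z₁ z₂ z₃ =
      ξ * β * z₁ ^ 2 * z₂ * z₃ / ((z₁ ^ 2 + c₄ ^ 2) * (z₂ + h)))
    (L₁ L₂ L₃ L : ℝ)
    (hL₁ : L₁ = H * M₂ / c₀ + δ * M₂ / c₂ + v * M₃ / c₃ + B * M₂ / c₁
      + 2 * ξ * β * M₁ * M₂ * M₃ / (h * c₄ ^ 2))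
    (hL₂ : L₂ = H * (M₁ + c₀) / c₀ + δ * M₁ * (M₁ + c₂) / c₂ ^ 2 + B * M₁ / c₁
      + 2 * γ * M₂ + β * M₃ / h + ξ * β * M₁ ^ 2 * M₃ / (h * c₄ ^ 2))
    (hL₃ : L₃ = v * M₁ * (M₁ + c₃) / c₃ ^ 2 + β * M₂ / h
      + ξ * β * M₁ ^ 2 * M₂ / (h * c₄ ^ 2))
    (hL : L = max (max L₁ L₂) L₃) :
    ∀ x₁ x₂ x₃ y₁ y₂ y₃ : ℝ,
      0 ≤ x₁ → x₁ ≤ M₁ → 0 ≤ y₁ → y₁ ≤ M₁ →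
      0 ≤ x₂ → x₂ ≤ M₂ → 0 ≤ y₂ → y₂ ≤ M₂ →
      0 ≤ x₃ → x₃ ≤ M₃ → 0 ≤ y₃ → y₃ ≤ M₃ →
      |f₁ x₁ x₂ x₃ - f₁ y₁ y₂ y₃| + |f₂ x₁ x₂ x₃ - f₂ y₁ y₂ y₃|
        + |f₃ x₁ x₂ x₃ - f₃ y₁ y₂ y₃|
      ≤ L * (|x₁ - y₁| + |x₂ - y₂| + |x₃ - y₃|) := by
  intro x₁ x₂ x₃ y₁ y₂ y₃ hx₁ hx₁' hy₁ hy₁' hx₂ hx₂' hy₂ hy₂' hx₃ hx₃' hy₃ hy₃'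
  have ht1 : (0:ℝ) ≤ |x₁ - y₁| := abs_nonneg _
  have ht2 : (0:ℝ) ≤ |x₂ - y₂| := abs_nonneg _
  have ht3 : (0:ℝ) ≤ |x₃ - y₃| := abs_nonneg _
  -- bounds for f₁
  have h1a := aux_H c₀ M₁ M₂ x₁ x₂ y₁ y₂ hc₀ hx₁ hy₁ hy₂ hy₂'
  have h1b := aux_prod c₂ M₁ M₂ x₁ x₂ y₁ y₂ hc₂ hx₁ hx₁' hy₁ hy₂ hy₂'
  have h1c := aux_prod c₃ M₁ M₃ x₁ x₃ y₁ y₃ hc₃ hx₁ hx₁' hy₁ hy₃ hy₃'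
  have T1 : |f₁ x₁ x₂ x₃ - f₁ y₁ y₂ y₃|
      ≤ H * (M₂ / c₀ * |x₁ - y₁| + |x₂ - y₂|)
        + δ * (M₂ / c₂ * |x₁ - y₁| + M₁ / c₂ * |x₂ - y₂|)
        + v * (M₃ / c₃ * |x₁ - y₁| + M₁ / c₃ * |x₃ - y₃|) := by
    have e₁ : f₁ x₁ x₂ x₃ - f₁ y₁ y₂ y₃ =
        (H * (c₀ * x₂ / (x₁ + c₀)) - H * (c₀ * y₂ / (y₁ + c₀)))
        - (δ * (x₁ * x₂ / (x₁ + c₂)) - δ * (y₁ * y₂ / (y₁ + c₂)))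
        - (v * (x₁ * x₃ / (x₁ + c₃)) - v * (y₁ * y₃ / (y₁ + c₃))) := by
      rw [hf₁, hf₁]; ring
    rw [e₁]
    refine (abs_sub_sub _ _ _).trans ?_
    rw [← mul_sub, ← mul_sub, ← mul_sub, abs_mul, abs_mul, abs_mul,
      abs_of_nonneg hH, abs_of_nonneg hδ, abs_of_nonneg hv]
    exact add_le_add (add_le_add (mul_le_mul_of_nonneg_left h1a hH)
      (mul_le_mul_of_nonneg_left h1b hδ)) (mul_le_mul_of_nonneg_left h1c hv)
  -- bounds for f₂
  have h2a := aux_prod c₁ M₁ M₂ x₁ x₂ y₁ y₂ hc₁ hx₁ hx₁' hy₁ hy₂ hy₂'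
  have h2b : |x₂ ^ 2 - y₂ ^ 2| ≤ 2 * M₂ * |x₂ - y₂| := by
    have e : x₂ ^ 2 - y₂ ^ 2 = (x₂ + y₂) * (x₂ - y₂) := by ring
    rw [e, abs_mul, abs_of_nonneg (add_nonneg hx₂ hy₂)]
    exact mul_le_mul_of_nonneg_right (by linarith) (abs_nonneg _)
  have h2c := aux_prod h M₂ M₃ x₂ x₃ y₂ y₃ hh hx₂ hx₂' hy₂ hy₃ hy₃'
  have T2 : |f₂ x₁ x₂ x₃ - f₂ y₁ y₂ y₃|
      ≤ B * (M₂ / c₁ * |x₁ - y₁| + M₁ / c₁ * |x₂ - y₂|)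
        + γ * (2 * M₂ * |x₂ - y₂|)
        + β * (M₃ / h * |x₂ - y₂| + M₂ / h * |x₃ - y₃|) := by
    have e₂ : f₂ x₁ x₂ x₃ - f₂ y₁ y₂ y₃ =
        (B * (x₁ * x₂ / (x₁ + c₁)) - B * (y₁ * y₂ / (y₁ + c₁)))
        - (γ * (x₂ ^ 2) - γ * (y₂ ^ 2))
        - (β * (x₂ * x₃ / (x₂ + h)) - β * (y₂ * y₃ / (y₂ + h))) := by
      rw [hf₂, hf₂]; ring
    rw [e₂]
    refine (abs_sub_sub _ _ _).trans ?_
    rw [← mul_sub, ← mul_sub, ← mul_sub, abs_mul, abs_mul, abs_mul,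
      abs_of_nonneg hB, abs_of_nonneg hγ, abs_of_nonneg hβ]
    exact add_le_add (add_le_add (mul_le_mul_of_nonneg_left h2a hB)
      (mul_le_mul_of_nonneg_left h2b hγ)) (mul_le_mul_of_nonneg_left h2c hβ)
  -- bound for f₃
  have h3 := aux_f3 c₄ h M₁ M₂ M₃ x₁ x₂ x₃ y₁ y₂ y₃ hc₄ hh
    hx₁ hx₁' hy₁ hy₁' hx₂ hx₂' hy₂ hy₂' hx₃ hx₃'
  have T3 : |f₃ x₁ x₂ x₃ - f₃ y₁ y₂ y₃|
      ≤ ξ * β * (2 * M₁ * M₂ * M₃ / (h * c₄ ^ 2) * |x₁ - y₁|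
        + M₁ ^ 2 * M₃ / (h * c₄ ^ 2) * |x₂ - y₂|
        + M₁ ^ 2 * M₂ / (h * c₄ ^ 2) * |x₃ - y₃|) := by
    have e₃ : f₃ x₁ x₂ x₃ - f₃ y₁ y₂ y₃ =
        ξ * β * (x₁ ^ 2 * x₂ * x₃ / ((x₁ ^ 2 + c₄ ^ 2) * (x₂ + h))
          - y₁ ^ 2 * y₂ * y₃ / ((y₁ ^ 2 + c₄ ^ 2) * (y₂ + h))) := by
      rw [hf₃, hf₃]; ring
    rw [e₃, abs_mul, abs_of_nonneg (mul_nonneg hξ hβ)]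
    exact mul_le_mul_of_nonneg_left h3 (mul_nonneg hξ hβ)
  -- coefficient comparisons
  have k2 : H ≤ H * (M₁ + c₀) / c₀ := coeff_H H M₁ c₀ hH hM₁ hc₀
  have k3 : δ * M₁ / c₂ ≤ δ * M₁ * (M₁ + c₂) / c₂ ^ 2 := coeff_div δ M₁ c₂ hδ hM₁ hc₂
  have k4 : v * M₁ / c₃ ≤ v * M₁ * (M₁ + c₃) / c₃ ^ 2 := coeff_div v M₁ c₃ hv hM₁ hc₃
  have step : |f₁ x₁ x₂ x₃ - f₁ y₁ y₂ y₃| + |f₂ x₁ x₂ x₃ - f₂ y₁ y₂ y₃|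
      + |f₃ x₁ x₂ x₃ - f₃ y₁ y₂ y₃|
      ≤ L₁ * |x₁ - y₁| + L₂ * |x₂ - y₂| + L₃ * |x₃ - y₃| := by
    subst hL₁ hL₂ hL₃
    have p2 := mul_le_mul_of_nonneg_right k2 ht2
    have p3 := mul_le_mul_of_nonneg_right k3 ht2
    have p4 := mul_le_mul_of_nonneg_right k4 ht3
    ring_nf at T1 T2 T3 p2 p3 p4 ⊢
    linarith [T1, T2, T3, p2, p3, p4]
  have hL1 : L₁ ≤ L := hL ▸ le_trans (le_max_left _ _) (le_max_left _ _)
  have hL2 : L₂ ≤ L := hL ▸ le_trans (le_max_right _ _) (le_max_left _ _)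
  have hL3 : L₃ ≤ L := hL ▸ le_max_right _ _
  refine step.trans ?_
  have q1 := mul_le_mul_of_nonneg_right hL1 ht1
  have q2 := mul_le_mul_of_nonneg_right hL2 ht2
  have q3 := mul_le_mul_of_nonneg_right hL3 ht3
  ring_nf at q1 q2 q3 ⊢
  linarith [q1, q2, q3]
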